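/- General dual-lattice shift of the generalized Appell function: let m ∈ Λ* and write m = m^∥ + m^⊥, where m^∥ is the B-orthogonal projection of m onto the ℝ-span of d_1,…,d_M and m^⊥ = m − m^∥. Then Φ_{μ+m,ν+m^∥}(τ,u,v,{d_r}) = e^{2πi B(m^∥,u) + 2πi B(v,m^⊥)} · e^{πiτ Q(m^⊥)} · Φ_{μ,ν}(τ, u, v+mτ, {d_r}). -/
import Mathlib


open scoped BigOperators Real
open Complex

/-- The complex bilinear form `B(x,y) = xᵀ 𝐀 y` attached to an integer matrix `𝐀`,
extended bilinearly to `ℂ^N`. -/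
noncomputable def bilC {N : ℕ} (A : Matrix (Fin N) (Fin N) ℤ) (x y : Fin N → ℂ) : ℂ :=
  ∑ i, ∑ j, x i * (A i j : ℂ) * y j

/-- The real bilinear form `B(x,y) = xᵀ 𝐀 y`. -/
noncomputable def bilR {N : ℕ} (A : Matrix (Fin N) (Fin N) ℤ) (x y : Fin N → ℝ) : ℝ :=
  ∑ i, ∑ j, x i * (A i j : ℝ) * y j

/-- The generalized Appell function `Φ_{μ,ν}(τ,u,v,{d_r})`:
`e^{2πi B(ν,u)} · Σ_{k ∈ ℤ^N} e^{πiτ Q(k+μ−ν) + 2πiτ B(ν,k+μ−ν) + 2πi B(v,k+μ−ν)}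
  / ∏_{r=1}^M (1 − e^{2πi B(d_r,u)} e^{2πiτ B(d_r,k+μ−ν)})`. -/
noncomputable def appellPhi {N M : ℕ} (A : Matrix (Fin N) (Fin N) ℤ)
    (d : Fin M → Fin N → ℤ) (τ : ℂ) (u v : Fin N → ℂ) (μ ν : Fin N → ℝ) : ℂ :=
  Complex.exp (2 * (π : ℂ) * I * bilC A (fun i => (ν i : ℂ)) u) *
  ∑' k : Fin N → ℤ,
    Complex.exp ((π : ℂ) * I * τ *
        bilC A (fun i => (k i : ℂ) + (μ i : ℂ) - (ν i : ℂ))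
               (fun i => (k i : ℂ) + (μ i : ℂ) - (ν i : ℂ))
      + 2 * (π : ℂ) * I * τ *
        bilC A (fun i => (ν i : ℂ)) (fun i => (k i : ℂ) + (μ i : ℂ) - (ν i : ℂ))
      + 2 * (π : ℂ) * I *
        bilC A v (fun i => (k i : ℂ) + (μ i : ℂ) - (ν i : ℂ))) /
    ∏ r, (1 - Complex.exp (2 * (π : ℂ) * I * bilC A (fun i => (d r i : ℂ)) u) *
      Complex.exp (2 * (π : ℂ) * I * τ *
        bilC A (fun i => (d r i : ℂ)) (fun i => (k i : ℂ) + (μ i : ℂ) - (ν i : ℂ))))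

section aux
variable {N : ℕ} (A : Matrix (Fin N) (Fin N) ℤ)

lemma bilC_add_left' (x x' y : Fin N → ℂ) :
    bilC A (fun i => x i + x' i) y = bilC A x y + bilC A x' y := by
  simp [bilC, add_mul, Finset.sum_add_distrib]

lemma bilC_add_right' (x y y' : Fin N → ℂ) :
    bilC A x (fun i => y i + y' i) = bilC A x y + bilC A x y' := by
  simp [bilC, mul_add, Finset.sum_add_distrib]

lemma bilC_mul_left' (x y : Fin N → ℂ) (c : ℂ) :
    bilC A (fun i => x i * c) y = c * bilC A x y := by
  simp only [bilC, Finset.mul_sum]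
  exact Finset.sum_congr rfl fun i _ => Finset.sum_congr rfl fun j _ => by ring

lemma bilC_symm' (h : A.IsSymm) (x y : Fin N → ℂ) : bilC A x y = bilC A y x := by
  rw [bilC, Finset.sum_comm, bilC]
  refine Finset.sum_congr rfl fun i _ => Finset.sum_congr rfl fun j _ => ?_
  rw [h.apply i j]; ring

lemma bilC_ofReal' (x y : Fin N → ℝ) :
    bilC A (fun i => (x i : ℂ)) (fun i => (y i : ℂ)) = ((bilR A x y : ℝ) : ℂ) := by
  unfold bilC bilR; push_cast; ring

lemma bilR_span_orth (w : Fin N → ℝ) {s : Set (Fin N → ℝ)}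
    (h : ∀ x ∈ s, bilR A x w = 0) {x : Fin N → ℝ}
    (hx : x ∈ Submodule.span ℝ s) : bilR A x w = 0 := by
  induction hx using Submodule.span_induction with
  | mem x hxs => exact h x hxs
  | zero => simp [bilR]
  | add x y hx hy ihx ihy =>
      have : bilR A (x + y) w = bilR A x w + bilR A y w := by
        simp [bilR, Pi.add_apply, add_mul, Finset.sum_add_distrib]
      rw [this, ihx, ihy, add_zero]
  | smul a x hx ih =>
      have : bilR A (a • x) w = a * bilR A x w := by
        simp only [bilR, Pi.smul_apply, smul_eq_mul, Finset.mul_sum]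
        exact Finset.sum_congr rfl fun i _ => Finset.sum_congr rfl fun j _ => by ring
      rw [this, ih, mul_zero]
end aux


/-- General dual-lattice shift of the generalized Appell function: for `m ∈ Λ*`
with `B`-orthogonal decomposition `m = m∥ + m⊥` relative to the span of `d_1,…,d_M`,
`Φ_{μ+m,ν+m∥}(τ,u,v,{d_r})
  = e^{2πi B(m∥,u) + 2πi B(v,m⊥)} · e^{πiτ Q(m⊥)} · Φ_{μ,ν}(τ, u, v+mτ, {d_r})`. -/
theorem appellPhi_dual_shift
    {N M : ℕ} (hN : 1 ≤ N) (hM : 1 ≤ M) (hMN : M ≤ N)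
    (A : Matrix (Fin N) (Fin N) ℤ) (hAsymm : A.IsSymm)
    (hApos : (A.map ((↑) : ℤ → ℝ)).PosDef)
    (d : Fin M → Fin N → ℤ)
    (hd : LinearIndependent ℝ (fun r => fun i => (d r i : ℝ)))
    (τ : ℂ) (hτ : 0 < τ.im) (u v : Fin N → ℂ)
    (μ ν : Fin N → ℝ)
    (hν : ν ∈ Submodule.span ℝ (Set.range (fun r => fun i => (d r i : ℝ))))
    (m : Fin N → ℝ)
    (hm : ∀ i : Fin N, ∃ z : ℤ, (∑ j, (A i j : ℝ) * m j) = (z : ℝ))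
    (mpar : Fin N → ℝ)
    (hpar : mpar ∈ Submodule.span ℝ (Set.range (fun r => fun i => (d r i : ℝ))))
    (hperp : ∀ r : Fin M, bilR A (fun i => (d r i : ℝ)) (fun i => m i - mpar i) = 0) :
    appellPhi A d τ u v (fun i => μ i + m i) (fun i => ν i + mpar i) =
      Complex.exp (2 * (π : ℂ) * I * bilC A (fun i => (mpar i : ℂ)) u
          + 2 * (π : ℂ) * I * bilC A v (fun i => ((m i - mpar i : ℝ) : ℂ))) *
        Complex.exp ((π : ℂ) * I * τ *
          bilC A (fun i => ((m i - mpar i : ℝ) : ℂ)) (fun i => ((m i - mpar i : ℝ) : ℂ))) *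
        appellPhi A d τ u (fun i => v i + (m i : ℂ) * τ) μ ν := by
  have hbν : bilR A ν (fun i => m i - mpar i) = 0 :=
    bilR_span_orth A _ (by rintro x ⟨r, rfl⟩; exact hperp r) hν
  have hbmpar : bilR A mpar (fun i => m i - mpar i) = 0 :=
    bilR_span_orth A _ (by rintro x ⟨r, rfl⟩; exact hperp r) hpar
  have hkey : ∀ k : Fin N → ℤ,
      Complex.exp ((π : ℂ) * I * τ *
          bilC A (fun i => (k i : ℂ) + ((μ i + m i : ℝ) : ℂ) - ((ν i + mpar i : ℝ) : ℂ))
                 (fun i => (k i : ℂ) + ((μ i + m i : ℝ) : ℂ) - ((ν i + mpar i : ℝ) : ℂ))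
        + 2 * (π : ℂ) * I * τ *
          bilC A (fun i => ((ν i + mpar i : ℝ) : ℂ))
                 (fun i => (k i : ℂ) + ((μ i + m i : ℝ) : ℂ) - ((ν i + mpar i : ℝ) : ℂ))
        + 2 * (π : ℂ) * I *
          bilC A v (fun i => (k i : ℂ) + ((μ i + m i : ℝ) : ℂ) - ((ν i + mpar i : ℝ) : ℂ))) /
      ∏ r, (1 - Complex.exp (2 * (π : ℂ) * I * bilC A (fun i => (d r i : ℂ)) u) *
        Complex.exp (2 * (π : ℂ) * I * τ *
          bilC A (fun i => (d r i : ℂ))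
                 (fun i => (k i : ℂ) + ((μ i + m i : ℝ) : ℂ) - ((ν i + mpar i : ℝ) : ℂ))))
      =
      Complex.exp ((π : ℂ) * I * τ *
          bilC A (fun i => ((m i - mpar i : ℝ) : ℂ)) (fun i => ((m i - mpar i : ℝ) : ℂ))
        + 2 * (π : ℂ) * I * bilC A v (fun i => ((m i - mpar i : ℝ) : ℂ))) *
      (Complex.exp ((π : ℂ) * I * τ *
          bilC A (fun i => (k i : ℂ) + (μ i : ℂ) - (ν i : ℂ))
                 (fun i => (k i : ℂ) + (μ i : ℂ) - (ν i : ℂ))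
        + 2 * (π : ℂ) * I * τ *
          bilC A (fun i => (ν i : ℂ)) (fun i => (k i : ℂ) + (μ i : ℂ) - (ν i : ℂ))
        + 2 * (π : ℂ) * I *
          bilC A (fun i => v i + (m i : ℂ) * τ)
                 (fun i => (k i : ℂ) + (μ i : ℂ) - (ν i : ℂ))) /
      ∏ r, (1 - Complex.exp (2 * (π : ℂ) * I * bilC A (fun i => (d r i : ℂ)) u) *
        Complex.exp (2 * (π : ℂ) * I * τ *
          bilC A (fun i => (d r i : ℂ))
                 (fun i => (k i : ℂ) + (μ i : ℂ) - (ν i : ℂ))))) := by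
    intro k
    have hW : (fun i => (k i : ℂ) + ((μ i + m i : ℝ) : ℂ) - ((ν i + mpar i : ℝ) : ℂ))
        = (fun i => ((k i : ℂ) + (μ i : ℂ) - (ν i : ℂ)) + ((m i - mpar i : ℝ) : ℂ)) := by
      funext i; push_cast; ring
    rw [hW]
    have hden : ∀ r : Fin M,
        bilC A (fun i => (d r i : ℂ))
          (fun i => ((k i : ℂ) + (μ i : ℂ) - (ν i : ℂ)) + ((m i - mpar i : ℝ) : ℂ))
        = bilC A (fun i => (d r i : ℂ)) (fun i => (k i : ℂ) + (μ i : ℂ) - (ν i : ℂ)) := by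
      intro r
      have hd' : (fun i => ((d r i : ℤ) : ℂ)) = (fun i => (((d r i : ℝ)) : ℂ)) := by
        funext i; push_cast; ring
      rw [hd', bilC_add_right', bilC_ofReal', hperp r, Complex.ofReal_zero, add_zero]
    simp only [hden]
    have hν'' : (fun i => ((ν i + mpar i : ℝ) : ℂ))
        = (fun i => ((ν i : ℝ) : ℂ) + ((mpar i : ℝ) : ℂ)) := by
      funext i; push_cast; ring
    rw [hν'']
    have hveq : (fun i => v i + (m i : ℂ) * τ)
        = (fun i => v i + (((mpar i : ℝ) : ℂ) + ((m i - mpar i : ℝ) : ℂ)) * τ) := by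
      funext i; push_cast; ring
    rw [hveq]
    simp only [bilC_add_left', bilC_add_right', bilC_mul_left']
    simp only [bilC_ofReal', hbν, hbmpar, Complex.ofReal_zero]
    rw [bilC_symm' A hAsymm (fun i => (k i : ℂ) + (μ i : ℂ) - (ν i : ℂ))
      (fun i => ((m i - mpar i : ℝ) : ℂ))]
    rw [← mul_div_assoc, ← Complex.exp_add]
    congr 2
    ring
  rw [appellPhi, appellPhi, tsum_congr hkey, tsum_mul_left]
  have hν' : (fun i => ((ν i + mpar i : ℝ) : ℂ))
      = (fun i => ((ν i : ℝ) : ℂ) + ((mpar i : ℝ) : ℂ)) := by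
    funext i; push_cast; ring
  rw [hν', bilC_add_left', mul_add, Complex.exp_add, Complex.exp_add, Complex.exp_add]
  ring
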